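/- Let f belong to F_n(C,ε) on (ℝ^d)^n with n ≥ 1, and set E₁ = (ℝ^d)^{n−1}, E₂ = ℝ^d. Then the partial symmetrisation S₂f (in the last ℝ^d coordinate) also belongs to F_n(C,ε). -/
import Mathlib


open MeasureTheory Real

/-- The class `F(C,ε)`: functions that are `Cε`-Lipschitz and satisfy
`f(x+h) + f(x-h) - 2f(x) ≤ Cε²|h|²` for all `x, h`. -/
def memF {E : Type*} [NormedAddCommGroup E] (C ε : ℝ) (f : E → ℝ) : Prop :=
  LipschitzWith (C * ε).toNNReal f ∧
    ∀ x h : E, f (x + h) + f (x - h) - 2 * f x ≤ C * ε ^ 2 * ‖h‖ ^ 2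

/-- The class `F_n(C,ε)` of functions on `(ℝ^d)^n`: functions belonging to `F(C,ε)`
with respect to each `ℝ^d`-coordinate block separately. -/
def memFn {d n : ℕ} (C ε : ℝ) (f : (Fin n → EuclideanSpace ℝ (Fin d)) → ℝ) : Prop :=
  ∀ (i : Fin n) (x : Fin n → EuclideanSpace ℝ (Fin d)),
    memF C ε fun y => f (Function.update x i y)

/-- The partial symmetrisation in the last `ℝ^d`-coordinate:
`S₂f(x,y) = inf_u ( ½(f(x, u+y) + f(x, u−y)) + ½|u|² )`. -/
noncomputable def Slast {d n : ℕ} (f : (Fin (n + 1) → EuclideanSpace ℝ (Fin d)) → ℝ)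
    (x : Fin (n + 1) → EuclideanSpace ℝ (Fin d)) : ℝ :=
  ⨅ u : EuclideanSpace ℝ (Fin d),
    ((f (Function.update x (Fin.last n) (u + x (Fin.last n))) +
        f (Function.update x (Fin.last n) (u - x (Fin.last n)))) / 2 + ‖u‖ ^ 2 / 2)

/-- A function in `F(C,ε)` is Lipschitz with the real constant `C * ε`. -/
lemma memF.dist_le {E : Type*} [NormedAddCommGroup E] {C ε : ℝ} (hCε : 0 ≤ C * ε)
    {f : E → ℝ} (hf : memF C ε f) (a b : E) : dist (f a) (f b) ≤ C * ε * dist a b := by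
  have := hf.1.dist_le_mul a b
  rwa [Real.coe_toNNReal _ hCε] at this

/-- The pointwise infimum of a family of functions, each `Cε`-Lipschitz and
`Cε²`-semiconcave, with pointwise bounded-below ranges, belongs to `F(C,ε)`. -/
lemma memF_iInf {E ι : Type*} [NormedAddCommGroup E] [Nonempty ι] {C ε : ℝ}
    (hCε : 0 ≤ C * ε) (Φ : ι → E → ℝ)
    (hb : ∀ y : E, BddBelow (Set.range fun u => Φ u y))
    (hlip : ∀ (u : ι) (a b : E), dist (Φ u a) (Φ u b) ≤ C * ε * dist a b)
    (hsc : ∀ (u : ι) (y h : E), Φ u (y + h) + Φ u (y - h) - 2 * Φ u y ≤ C * ε ^ 2 * ‖h‖ ^ 2) :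
    memF C ε fun y => ⨅ u, Φ u y := by
  have key : ∀ a b : E, (⨅ u, Φ u a) ≤ (⨅ u, Φ u b) + C * ε * dist a b := by
    intro a b
    rw [← sub_le_iff_le_add]
    apply le_ciInf
    intro u
    have h1 : (⨅ v, Φ v a) ≤ Φ u a := ciInf_le (hb a) u
    have h2 := hlip u a b
    rw [Real.dist_eq, abs_le] at h2
    linarith [h2.2]
  constructor
  · apply LipschitzWith.of_dist_le_mul
    intro a b
    rw [Real.coe_toNNReal _ hCε, Real.dist_eq, abs_le]
    have k1 := key a b
    have k2 := key b a
    rw [dist_comm b a] at k2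
    constructor <;> linarith
  · intro y h
    have key2 : ((⨅ u, Φ u (y + h)) + (⨅ u, Φ u (y - h)) - C * ε ^ 2 * ‖h‖ ^ 2) / 2
        ≤ ⨅ u, Φ u y := by
      apply le_ciInf
      intro u
      have h1 : (⨅ v, Φ v (y + h)) ≤ Φ u (y + h) := ciInf_le (hb _) u
      have h2 : (⨅ v, Φ v (y - h)) ≤ Φ u (y - h) := ciInf_le (hb _) u
      have h3 := hsc u y h
      linarith
    linarith [key2]

/-- The class `F_n(C,ε)` is stable under partial symmetrisation in the last
coordinate: if `f ∈ F_n(C,ε)` then `S₂f ∈ F_n(C,ε)`. -/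
theorem Slast_memFn {d n : ℕ} (C ε : ℝ) (hC : 0 < C) (hε : ε ∈ Set.Ioc (0 : ℝ) 1)
    (f : (Fin (n + 1) → EuclideanSpace ℝ (Fin d)) → ℝ)
    (hf : memFn C ε f) : memFn C ε (Slast f) := by
  have hCε : 0 ≤ C * ε := le_of_lt (mul_pos hC hε.1)
  intro i x
  have hrw : (fun y => Slast f (Function.update x i y))
      = fun y : EuclideanSpace ℝ (Fin d) => ⨅ u : EuclideanSpace ℝ (Fin d),
          ((f (Function.update (Function.update x i y) (Fin.last n)
              (u + (Function.update x i y) (Fin.last n))) +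
            f (Function.update (Function.update x i y) (Fin.last n)
              (u - (Function.update x i y) (Fin.last n)))) / 2 + ‖u‖ ^ 2 / 2) := rfl
  rw [hrw]
  refine memF_iInf hCε _ ?_ ?_ ?_
  · -- bounded below
    intro y
    set z := Function.update x i y with hz
    set c := z (Fin.last n) with hc
    refine ⟨(f (Function.update z (Fin.last n) c)
        + f (Function.update z (Fin.last n) (-c))) / 2 - (C * ε) ^ 2 / 2, ?_⟩
    rintro _ ⟨u, rfl⟩
    show (f (Function.update z (Fin.last n) c)
        + f (Function.update z (Fin.last n) (-c))) / 2 - (C * ε) ^ 2 / 2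
      ≤ (f (Function.update z (Fin.last n) (u + c))
          + f (Function.update z (Fin.last n) (u - c))) / 2 + ‖u‖ ^ 2 / 2
    have h1 : dist (f (Function.update z (Fin.last n) (u + c)))
        (f (Function.update z (Fin.last n) c)) ≤ C * ε * dist (u + c) c :=
      memF.dist_le hCε (hf (Fin.last n) z) _ _
    have h2 : dist (f (Function.update z (Fin.last n) (u - c)))
        (f (Function.update z (Fin.last n) (-c))) ≤ C * ε * dist (u - c) (-c) :=
      memF.dist_le hCε (hf (Fin.last n) z) _ _
    have e1 : dist (u + c) c = ‖u‖ := by simp [dist_eq_norm]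
    have e2 : dist (u - c) (-c) = ‖u‖ := by
      rw [dist_eq_norm]; congr 1; abel
    rw [e1, Real.dist_eq, abs_le] at h1
    rw [e2, Real.dist_eq, abs_le] at h2
    nlinarith [sq_nonneg (‖u‖ - C * ε), h1.1, h2.1, norm_nonneg u]
  · -- Lipschitz
    intro u a b
    by_cases hi : i = Fin.last n
    · subst hi
      simp only [Function.update_idem, Function.update_self]
      have h1 : dist (f (Function.update x (Fin.last n) (u + a)))
          (f (Function.update x (Fin.last n) (u + b))) ≤ C * ε * dist (u + a) (u + b) :=
        memF.dist_le hCε (hf (Fin.last n) x) _ _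
      have h2 : dist (f (Function.update x (Fin.last n) (u - a)))
          (f (Function.update x (Fin.last n) (u - b))) ≤ C * ε * dist (u - a) (u - b) :=
        memF.dist_le hCε (hf (Fin.last n) x) _ _
      rw [dist_add_left] at h1
      rw [dist_sub_left] at h2
      rw [Real.dist_eq, abs_le] at h1 h2 ⊢
      constructor <;> linarith [h1.1, h1.2, h2.1, h2.2]
    · have e3 : ∀ w : EuclideanSpace ℝ (Fin d),
          (Function.update x i w) (Fin.last n) = x (Fin.last n) :=
        fun w => Function.update_of_ne (Ne.symm hi) _ _
      have e4 : ∀ (w v : EuclideanSpace ℝ (Fin d)),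
          Function.update (Function.update x i w) (Fin.last n) v
            = Function.update (Function.update x (Fin.last n) v) i w :=
        fun w v => Function.update_comm hi _ _ _
      simp only [e3, e4]
      have h1 : dist (f (Function.update (Function.update x (Fin.last n) (u + x (Fin.last n))) i a))
          (f (Function.update (Function.update x (Fin.last n) (u + x (Fin.last n))) i b))
          ≤ C * ε * dist a b :=
        memF.dist_le hCε (hf i _) _ _
      have h2 : dist (f (Function.update (Function.update x (Fin.last n) (u - x (Fin.last n))) i a))
          (f (Function.update (Function.update x (Fin.last n) (u - x (Fin.last n))) i b))
          ≤ C * ε * dist a b :=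
        memF.dist_le hCε (hf i _) _ _
      rw [Real.dist_eq, abs_le] at h1 h2 ⊢
      constructor <;> linarith [h1.1, h1.2, h2.1, h2.2]
  · -- semiconcavity
    intro u y h
    by_cases hi : i = Fin.last n
    · subst hi
      simp only [Function.update_idem, Function.update_self]
      have A : f (Function.update x (Fin.last n) (u + y + h))
          + f (Function.update x (Fin.last n) (u + y - h))
          - 2 * f (Function.update x (Fin.last n) (u + y)) ≤ C * ε ^ 2 * ‖h‖ ^ 2 :=
        (hf (Fin.last n) x).2 (u + y) h
      have B : f (Function.update x (Fin.last n) (u - y + h))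
          + f (Function.update x (Fin.last n) (u - y - h))
          - 2 * f (Function.update x (Fin.last n) (u - y)) ≤ C * ε ^ 2 * ‖h‖ ^ 2 :=
        (hf (Fin.last n) x).2 (u - y) h
      have r1 : u + (y + h) = u + y + h := by abel
      have r2 : u - (y + h) = u - y - h := by abel
      have r3 : u + (y - h) = u + y - h := by abel
      have r4 : u - (y - h) = u - y + h := by abel
      rw [r1, r2, r3, r4]
      linarith
    · have e3 : ∀ w : EuclideanSpace ℝ (Fin d),
          (Function.update x i w) (Fin.last n) = x (Fin.last n) :=
        fun w => Function.update_of_ne (Ne.symm hi) _ _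
      have e4 : ∀ (w v : EuclideanSpace ℝ (Fin d)),
          Function.update (Function.update x i w) (Fin.last n) v
            = Function.update (Function.update x (Fin.last n) v) i w :=
        fun w v => Function.update_comm hi _ _ _
      simp only [e3, e4]
      have A : f (Function.update (Function.update x (Fin.last n) (u + x (Fin.last n))) i (y + h))
          + f (Function.update (Function.update x (Fin.last n) (u + x (Fin.last n))) i (y - h))
          - 2 * f (Function.update (Function.update x (Fin.last n) (u + x (Fin.last n))) i y)
          ≤ C * ε ^ 2 * ‖h‖ ^ 2 := (hf i _).2 y h
      have B : f (Function.update (Function.update x (Fin.last n) (u - x (Fin.last n))) i (y + h))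
          + f (Function.update (Function.update x (Fin.last n) (u - x (Fin.last n))) i (y - h))
          - 2 * f (Function.update (Function.update x (Fin.last n) (u - x (Fin.last n))) i y)
          ≤ C * ε ^ 2 * ‖h‖ ^ 2 := (hf i _).2 y h
      linarith
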